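/- Let H be an M×N matrix with nonnegative entries and y ∈ {0,1}^M. If there exists z ∈ {0,1}^N with T(Hz) = y, then x_max := ¬T(Hᵀ(¬y)) satisfies T(H x_max) = y. -/

import Mathlib

open Finset

/-- Positivity thresholding operator. -/
noncomputable def T {K : ℕ} (v : Fin K → ℝ) : Fin K → ℝ := fun k => if 0 < v k then 1 else 0

/-- Entrywise Boolean negation (swaps 0 and 1 on binary vectors). -/
def bneg {K : ℕ} (v : Fin K → ℝ) : Fin K → ℝ := fun k => 1 - v k

/-- Matrix-vector product. -/
def mulv {M N : ℕ} (H : Fin M → Fin N → ℝ) (x : Fin N → ℝ) : Fin M → ℝ :=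
  fun m => ∑ n, H m n * x n

/-- Transpose. -/
def tr {M N : ℕ} (H : Fin M → Fin N → ℝ) : Fin N → Fin M → ℝ := fun n m => H m n

/-- Silhouette operator. -/
noncomputable def S {M N : ℕ} (H : Fin M → Fin N → ℝ) (x : Fin N → ℝ) : Fin M → ℝ := T (mulv H x)

/-- Maximal solution candidate. -/
noncomputable def xmax {M N : ℕ} (H : Fin M → Fin N → ℝ) (y : Fin M → ℝ) : Fin N → ℝ :=
  bneg (T (mulv (tr H) (bneg y)))

/-- A vector is binary if each entry is 0 or 1. -/
def IsBin {K : ℕ} (v : Fin K → ℝ) : Prop := ∀ k, v k = 0 ∨ v k = 1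

theorem stmt_3 {M N : ℕ} (H : Fin M → Fin N → ℝ) (hH : ∀ m n, 0 ≤ H m n)
    (y : Fin M → ℝ) (hy : IsBin y)
    (hex : ∃ z : Fin N → ℝ, IsBin z ∧ S H z = y) :
    S H (xmax H y) = y := by
  obtain ⟨z, hz, hSz⟩ := hex
  -- xmax is binary, with value 1 iff column n is null on {m : y m = 0}
  have hx1 : ∀ n, xmax H y n = 1 ↔ ∀ m', y m' = 0 → H m' n = 0 := by
    intro n
    simp only [xmax, bneg, T, mulv, tr]
    constructor
    · intro h m' hm'
      by_contra hne
      have hpos : 0 < ∑ m'', H m'' n * (1 - y m'') := by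
        apply Finset.sum_pos'
        · intro i _
          rcases hy i with h0 | h1
          · simp [h0]; exact hH i n
          · simp [h1]
        · exact ⟨m', Finset.mem_univ m', by
            rw [hm']
            simpa using lt_of_le_of_ne (hH m' n) (Ne.symm hne)⟩
      simp only [hpos, ↓reduceIte] at h; norm_num at h
    · intro h
      have hzero : ∑ m'', H m'' n * (1 - y m'') = 0 := by
        apply Finset.sum_eq_zero
        intro i _
        rcases hy i with h0 | h1
        · rw [h i h0]; ring
        · rw [h1]; ring
      simp only [hzero]; norm_num
  have hx01 : ∀ n, xmax H y n = 0 ∨ xmax H y n = 1 := by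
    intro n
    simp only [xmax, bneg, T]
    by_cases h : 0 < mulv (tr H) (bneg y) n <;> simp [h]
  funext m
  simp only [S, T, mulv]
  rcases hy m with h0 | h1
  · rw [h0]; refine if_neg ?_
    rw [not_lt]
    apply Finset.sum_nonpos
    intro n _
    rcases hx01 n with hn0 | hn1
    · rw [hn0]; simp
    · rw [(hx1 n).mp hn1 m h0]; simp
  · rw [h1]; refine if_pos ?_
    -- from hSz, (Hz)_m > 0, so some n with H m n > 0 and z n = 1
    have hm : (0:ℝ) < ∑ n, H m n * z n := by
      have := congrFun hSz m
      simp only [S, T, mulv] at this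
      by_contra hc
      simp only [hc, ↓reduceIte] at this
      rw [← this] at h1; norm_num at h1
    obtain ⟨n, -, hn⟩ : ∃ n ∈ Finset.univ, 0 < H m n * z n := by
      by_contra hc
      push_neg at hc
      exact absurd (Finset.sum_nonpos fun i hi => hc i hi) (not_le.mpr hm)
    have hHmn : 0 < H m n := by
      rcases hz n with hz0 | hz1
      · rw [hz0] at hn; simp at hn
      · rw [hz1] at hn; simpa using hn
    have hxn : xmax H y n = 1 := by
      rw [hx1]
      intro m' hm'
      by_contra hne
      have hHm'n : 0 < H m' n := lt_of_le_of_ne (hH m' n) (Ne.symm hne)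
      have hpos : (0:ℝ) < ∑ k, H m' k * z k := by
        have hzn1 : z n = 1 := by
          rcases hz n with hz0 | hz1
          · rw [hz0] at hn; simp at hn
          · exact hz1
        calc (0:ℝ) < H m' n * z n := by rw [hzn1]; simpa using hHm'n
        _ ≤ ∑ k, H m' k * z k := by
            apply Finset.single_le_sum (fun i _ => ?_) (Finset.mem_univ n)
            rcases hz i with h0' | h1'
            · rw [h0']; simp
            · rw [h1']; simpa using hH m' i
      have := congrFun hSz m'
      simp only [S, T, mulv] at this
      simp only [hpos, ↓reduceIte] at this
      rw [← this] at hm'; norm_num at hm'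
    calc (0:ℝ) < H m n * xmax H y n := by rw [hxn]; simpa using hHmn
    _ ≤ ∑ k, H m k * xmax H y k := by
        apply Finset.single_le_sum (fun i _ => ?_) (Finset.mem_univ n)
        rcases hx01 i with h0' | h1'
        · rw [h0']; simp
        · rw [h1']; simpa using hH m i
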